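/- If the formal power series P over ℚ satisfies P = 1 + xP + x^2 P^2 and has constant term 1, then P is unique; moreover its coefficient sequence satisfies (n+2)·a(n) = (2n+1)·a(n-1) + 3(n-1)·a(n-2) for n ≥ 2, with a(0) = a(1) = 1. -/

import Mathlib

open PowerSeries

theorem motzkin_series_unique_and_recurrence (P : ℚ⟦X⟧)
    (hP : P = 1 + X * P + X ^ 2 * P ^ 2) (hP0 : constantCoeff P = 1) :
    (∀ Q : ℚ⟦X⟧, Q = 1 + X * Q + X ^ 2 * Q ^ 2 → constantCoeff Q = 1 → Q = P) ∧
      coeff 0 P = 1 ∧ coeff 1 P = 1 ∧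
      ∀ n : ℕ, 2 ≤ n →
        ((n : ℚ) + 2) * coeff n P =
          (2 * (n : ℚ) + 1) * coeff (n - 1) P + 3 * ((n : ℚ) - 1) * coeff (n - 2) P := by
  have key : ∀ Q : ℚ⟦X⟧, Q = 1 + X * Q + X ^ 2 * Q ^ 2 → constantCoeff Q = 1 →
      ∀ n, coeff n Q = coeff n P := by
    intro Q hQ hQ0 n
    induction n using Nat.strong_induction_on with
    | _ n ih =>
      match n with
      | 0 => simp [coeff_zero_eq_constantCoeff, hQ0, hP0]
      | (m+1) =>
        have expand : ∀ R : ℚ⟦X⟧, coeff (m+1) (1 + X * R + X ^ 2 * R ^ 2) =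
            coeff m R + if 2 ≤ m + 1 then coeff (m+1-2) (R^2) else 0 := by
          intro R
          rw [map_add, map_add, coeff_succ_X_mul, coeff_X_pow_mul', coeff_one]
          simp
        conv_lhs => rw [hQ]
        conv_rhs => rw [hP]
        rw [expand, expand, ih m (Nat.lt_succ_self m)]
        congr 1
        split_ifs with h
        · have hm : 1 ≤ m := by omega
          rw [sq, sq, coeff_mul, coeff_mul]
          apply Finset.sum_congr rfl
          intro p hp
          have := Finset.HasAntidiagonal.mem_antidiagonal.mp hp
          rw [ih p.1 (by omega), ih p.2 (by omega)]
        · rfl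
  have a0 : coeff 0 P = 1 := by simpa [coeff_zero_eq_constantCoeff] using hP0
  have a1 : coeff 1 P = 1 := by
    conv_lhs => rw [hP]
    rw [map_add, map_add, coeff_succ_X_mul, coeff_X_pow_mul', coeff_one]
    simp [a0]
  refine ⟨fun Q hQ hQ0 => PowerSeries.ext (key Q hQ hQ0), a0, a1, ?_⟩
  -- the holonomic recurrence via formal differentiation
  have e1 : X ^ 2 * P ^ 2 = (1 - X) * P - 1 := by linear_combination -hP
  have e2 : d⁄dX ℚ P = P + X * d⁄dX ℚ P + 2 * X * P ^ 2 + 2 * X ^ 2 * P * d⁄dX ℚ P := by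
    conv_lhs => rw [hP]
    simp only [map_add, Derivation.leibniz, Derivation.leibniz_pow, derivative_X,
      Derivation.map_one_eq_zero, smul_eq_mul]
    ring
  have T : X * (1 - 2 * X - 3 * X ^ 2) * d⁄dX ℚ P = (3 * X ^ 2 + 3 * X - 2) * P + 2 := by
    linear_combination (X * (1 - X - 2 * X ^ 2 * P)) * e2 -
      (4 * X ^ 3 * d⁄dX ℚ P + 4 * X ^ 2 * P + 2) * e1
  have T' : X * d⁄dX ℚ P - (2:ℚ) • (X ^ 2 * d⁄dX ℚ P) - (3:ℚ) • (X ^ 3 * d⁄dX ℚ P) =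
      (3:ℚ) • (X ^ 2 * P) + (3:ℚ) • (X * P) - (2:ℚ) • P + (2:ℚ) • (1 : ℚ⟦X⟧) := by
    simp only [smul_eq_C_mul, map_ofNat]
    linear_combination T
  intro n hn
  obtain ⟨m, rfl⟩ : ∃ m, n = m + 2 := ⟨n - 2, by omega⟩
  have hT := congrArg (coeff (m + 2)) T'
  simp only [map_sub, map_add, map_smul, coeff_succ_X_mul, coeff_X_pow_mul',
    coeff_derivative, coeff_one, smul_eq_mul] at hT
  rcases m with _ | k
  · norm_num at hT ⊢
    linear_combination hT
  · have h3 : 3 ≤ k + 1 + 2 := by omega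
    have h2 : 2 ≤ k + 1 + 2 := by omega
    rw [if_pos h2, if_pos h3, if_pos h2] at hT
    simp only [show k + 1 + 2 - 2 = k + 1 from rfl, show k + 1 + 2 - 3 = k from rfl,
      show k + 1 + 2 - 1 = k + 2 from rfl, if_neg (by omega : ¬ (k + 1 + 2 = 0))] at hT
    simp only [show k + 1 + 2 - 1 = k + 2 from rfl, show k + 1 + 2 - 2 = k + 1 from rfl]
    push_cast at hT ⊢
    linear_combination hT
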